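/- Let M be a meet irreducible finitely generated R-module all of whose maximal submodules are strongly irreducible. Then the family B_M of coprime cosets m + N, where m ∈ M and N is a nonzero submodule with N + Rm = M, is the basis for a topology on M. -/
import Mathlib


open Pointwise

/-- If `M` is a meet irreducible finitely generated module all of whose maximal
submodules are strongly irreducible, then the family of coprime cosets is a basis
for a topology on `M`. -/
theorem coprime_cosets_isBasis_of_fg
    {R M : Type*} [CommRing R] [AddCommGroup M] [Module R M] [Nontrivial M]
    [Module.Finite R M]
    (hmi : ∀ K L : Submodule R M, K ≠ ⊥ → L ≠ ⊥ → K ⊓ L ≠ ⊥)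
    (hsi : ∀ P : Submodule R M, IsCoatom P →
      ∀ K L : Submodule R M, K ⊓ L ≤ P → K ≤ P ∨ L ≤ P) :
    letI B : Set (Set M) := {S | ∃ (m : M) (N : Submodule R M),
      N ≠ ⊥ ∧ N ⊔ Submodule.span R {m} = ⊤ ∧ S = m +ᵥ (N : Set M)}
    @TopologicalSpace.IsTopologicalBasis M (TopologicalSpace.generateFrom B) B := by
  have hcoatomic : IsCoatomic (Submodule R M) :=
    CompleteLattice.coatomic_of_top_compact
      ((Submodule.fg_iff_compact ⊤).mp Module.Finite.fg_top)
  -- membership in a coprime coset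
  have hmem : ∀ (m x : M) (N : Submodule R M), x ∈ m +ᵥ (N : Set M) ↔ x - m ∈ N := by
    intro m x N
    constructor
    · rintro ⟨y, hy, rfl⟩; simpa using hy
    · intro h; exact ⟨x - m, h, show m + (x - m) = x by abel⟩
  refine @TopologicalSpace.IsTopologicalBasis.mk M (TopologicalSpace.generateFrom _) _ ?_ ?_ rfl
  · rintro t₁ ⟨m₁, N₁, hN₁, hc₁, rfl⟩ t₂ ⟨m₂, N₂, hN₂, hc₂, rfl⟩ x ⟨hx₁, hx₂⟩
    refine ⟨x +ᵥ ((N₁ ⊓ N₂ : Submodule R M) : Set M), ⟨x, N₁ ⊓ N₂, hmi _ _ hN₁ hN₂, ?_, rfl⟩,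
      ?_, ?_⟩
    · -- coprimality: (N₁ ⊓ N₂) ⊔ span {x} = ⊤
      by_contra h
      rcases (eq_top_or_exists_le_coatom ((N₁ ⊓ N₂) ⊔ Submodule.span R {x})).resolve_left h
        with ⟨P, hP, hle⟩
      have hxP : x ∈ P := hle (le_sup_right (α := Submodule R M)
        (Submodule.mem_span_singleton_self x))
      have hinf : N₁ ⊓ N₂ ≤ P := le_trans le_sup_left hle
      rcases hsi P hP N₁ N₂ hinf with hNP | hNP
      · have hm : m₁ ∈ P := by
          have := (hmem m₁ x N₁).mp hx₁
          have hsub : x - (x - m₁) ∈ P := P.sub_mem hxP (hNP this)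
          simpa using hsub
        have : N₁ ⊔ Submodule.span R {m₁} ≤ P :=
          sup_le hNP ((Submodule.span_singleton_le_iff_mem _ _).mpr hm)
        rw [hc₁] at this
        exact hP.1 (top_le_iff.mp this)
      · have hm : m₂ ∈ P := by
          have := (hmem m₂ x N₂).mp hx₂
          have hsub : x - (x - m₂) ∈ P := P.sub_mem hxP (hNP this)
          simpa using hsub
        have : N₂ ⊔ Submodule.span R {m₂} ≤ P :=
          sup_le hNP ((Submodule.span_singleton_le_iff_mem _ _).mpr hm)
        rw [hc₂] at this
        exact hP.1 (top_le_iff.mp this)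
    · exact (hmem x x _).mpr (by simp)
    · rintro y hy
      have hy' : y - x ∈ N₁ ⊓ N₂ := (hmem x y _).mp hy
      constructor
      · refine (hmem m₁ y N₁).mpr ?_
        have : (y - x) + (x - m₁) ∈ N₁ := N₁.add_mem hy'.1 ((hmem m₁ x N₁).mp hx₁)
        simpa [sub_add_sub_cancel] using this
      · refine (hmem m₂ y N₂).mpr ?_
        have : (y - x) + (x - m₂) ∈ N₂ := N₂.add_mem hy'.2 ((hmem m₂ x N₂).mp hx₂)
        simpa [sub_add_sub_cancel] using this
  · refine Set.eq_univ_of_forall fun x => ?_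
    exact ⟨(0 : M) +ᵥ ((⊤ : Submodule R M) : Set M),
      ⟨0, ⊤, top_ne_bot, by simp, rfl⟩, (hmem 0 x ⊤).mpr trivial⟩
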